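/- Let δ > 0, ε > 0, C ∈ ℝ with C ≠ 0, and y₀, u₀ ∈ ℝ. Set t₀ = √2 δ ε / (2|C|) and define u : ℝ → ℝ by u(y) = −(C/ε)(y−y₀)² + u₀ for |y−y₀| ≤ t₀, and u(y) = −(C/(1+ε))( (y−y₀)² + √2 δ |y−y₀|/|C| − ε(√2 δ/(2C))² ) + u₀ for |y−y₀| ≥ t₀. Then u is continuously differentiable on ℝ with |u'(y)| ≤ √2 δ for |y−y₀| ≤ t₀ and |u'(y)| > √2 δ for |y−y₀| > t₀, u is twice differentiable at every y with |y−y₀| ∉ {t₀}, and at every such y it satisfies (ε + H(|u'(y)| − √2 δ)) u''(y) = −2C, where H(t) = 1 for t > 0 and H(t) = 0 otherwise. -/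

import Mathlib

open Set Filter Topology

noncomputable def Dfun (ε C y₀ t₀ s : ℝ) : ℝ → ℝ := fun y =>
  if |y - y₀| ≤ t₀ then -(2 * C / ε) * (y - y₀)
  else if 0 ≤ y - y₀ then -(C / (1 + ε)) * (2 * (y - y₀) + s / |C|)
  else -(C / (1 + ε)) * (2 * (y - y₀) - s / |C|)

lemma Dfun_inner {ε C y₀ t₀ s z : ℝ} (h : |z - y₀| ≤ t₀) :
    Dfun ε C y₀ t₀ s z = -(2 * C / ε) * (z - y₀) := by
  simp [Dfun, h]

lemma Dfun_pos {ε C y₀ t₀ s z : ℝ} (h0 : 0 < t₀) (h : t₀ < z - y₀) :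
    Dfun ε C y₀ t₀ s z = -(C / (1 + ε)) * (2 * (z - y₀) + s / |C|) := by
  have h1 : ¬ |z - y₀| ≤ t₀ := by
    rw [abs_of_pos (by linarith)]; linarith
  have h2 : 0 ≤ z - y₀ := by linarith
  simp [Dfun, h1, h2]

lemma Dfun_neg {ε C y₀ t₀ s z : ℝ} (h0 : 0 < t₀) (h : z - y₀ < -t₀) :
    Dfun ε C y₀ t₀ s z = -(C / (1 + ε)) * (2 * (z - y₀) - s / |C|) := by
  have h1 : ¬ |z - y₀| ≤ t₀ := by
    rw [abs_of_neg (by linarith)]; linarith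
  have h2 : ¬ 0 ≤ z - y₀ := by linarith
  simp [Dfun, h1, h2]

private lemma hq_aux (a b c y₀ y : ℝ) :
    HasDerivAt (fun z : ℝ => a * ((z - y₀) * (z - y₀)) + b * (z - y₀) + c)
      (2 * a * (y - y₀) + b) y := by
  have h1 : HasDerivAt (fun z : ℝ => z - y₀) 1 y := (hasDerivAt_id y).sub_const y₀
  have h := (((h1.mul h1).const_mul a).add (h1.const_mul b)).add_const c
  have e : 2 * a * (y - y₀) + b = a * (1 * (y - y₀) + (y - y₀) * 1) + b * 1 := by ring
  rw [e]; exact h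

/-- Simple shear flow solutions of the regularized Euler/Navier-Stokes fluid:
the piecewise profile is C¹, has `|u'| ≤ √2 δ` inside the activation interval and
`|u'| > √2 δ` outside, is twice differentiable away from `|y − y₀| = t₀`, and
solves `(ε + H(|u'| − √2 δ)) u'' = −2C` there. -/
theorem statement11 (δ ε C y₀ u₀ : ℝ) (hδ : 0 < δ) (hε : 0 < ε) (hC : C ≠ 0)
    (t₀ : ℝ) (ht₀ : t₀ = Real.sqrt 2 * δ * ε / (2 * |C|))
    (u : ℝ → ℝ)
    (hu₁ : ∀ y, |y - y₀| ≤ t₀ → u y = -(C / ε) * (y - y₀) ^ 2 + u₀)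
    (hu₂ : ∀ y, t₀ ≤ |y - y₀| →
      u y = -(C / (1 + ε)) * ((y - y₀) ^ 2 + Real.sqrt 2 * δ * |y - y₀| / |C|
              - ε * (Real.sqrt 2 * δ / (2 * C)) ^ 2) + u₀)
    (H : ℝ → ℝ) (hH : ∀ t, H t = if 0 < t then 1 else 0) :
    ContDiff ℝ 1 u ∧
    (∀ y, |y - y₀| ≤ t₀ → |deriv u y| ≤ Real.sqrt 2 * δ) ∧
    (∀ y, t₀ < |y - y₀| → Real.sqrt 2 * δ < |deriv u y|) ∧
    (∀ y, |y - y₀| ≠ t₀ → ∃ c : ℝ, HasDerivAt (deriv u) c y ∧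
      (ε + H (|deriv u y| - Real.sqrt 2 * δ)) * c = -(2 * C)) := by
  have hC0 : (0 : ℝ) < |C| := abs_pos.mpr hC
  have hCne : |C| ≠ 0 := ne_of_gt hC0
  have hεne : ε ≠ 0 := ne_of_gt hε
  have hε1 : (0 : ℝ) < 1 + ε := by linarith
  have hε1ne : (1 : ℝ) + ε ≠ 0 := ne_of_gt hε1
  have ht0 : 0 < t₀ := ht₀ ▸ div_pos (by positivity) (by linarith)
  set s : ℝ := Real.sqrt 2 * δ with hs
  have hs0 : 0 < s := by rw [hs]; positivity
  have h2At0 : 2 * |C| * t₀ = s * ε := by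
    rw [ht₀]; field_simp
  set D : ℝ → ℝ := Dfun ε C y₀ t₀ s with hDdef
  -- basic continuity
  have hcabs : Continuous fun z : ℝ => |z - y₀| := (continuous_id.sub continuous_const).abs
  have hcsub : Continuous fun z : ℝ => z - y₀ := continuous_id.sub continuous_const
  -- the three explicit pieces and their derivatives
  have hqf : ∀ y : ℝ, HasDerivAt (fun z : ℝ => -(C / ε) * (z - y₀) ^ 2 + u₀)
      (-(2 * C / ε) * (y - y₀)) y := by
    intro y
    have h := hq_aux (-(C / ε)) 0 u₀ y₀ y
    have e : (fun z : ℝ => -(C / ε) * (z - y₀) ^ 2 + u₀)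
        = fun z : ℝ => -(C / ε) * ((z - y₀) * (z - y₀)) + 0 * (z - y₀) + u₀ := by
      funext z; ring
    have e2 : -(2 * C / ε) * (y - y₀) = 2 * (-(C / ε)) * (y - y₀) + 0 := by ring
    rw [e, e2]; exact h
  have hqp : ∀ y : ℝ, HasDerivAt (fun z : ℝ =>
        -(C / (1 + ε)) * ((z - y₀) ^ 2 + s * (z - y₀) / |C| - ε * (s / (2 * C)) ^ 2) + u₀)
      (-(C / (1 + ε)) * (2 * (y - y₀) + s / |C|)) y := by
    intro y
    have h := hq_aux (-(C / (1 + ε))) (-(C / (1 + ε)) * (s / |C|))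
      (C / (1 + ε) * (ε * (s / (2 * C)) ^ 2) + u₀) y₀ y
    have e : (fun z : ℝ =>
          -(C / (1 + ε)) * ((z - y₀) ^ 2 + s * (z - y₀) / |C| - ε * (s / (2 * C)) ^ 2) + u₀)
        = fun z : ℝ => -(C / (1 + ε)) * ((z - y₀) * (z - y₀))
            + -(C / (1 + ε)) * (s / |C|) * (z - y₀)
            + (C / (1 + ε) * (ε * (s / (2 * C)) ^ 2) + u₀) := by
      funext z; ring
    have e2 : -(C / (1 + ε)) * (2 * (y - y₀) + s / |C|)
        = 2 * (-(C / (1 + ε))) * (y - y₀) + -(C / (1 + ε)) * (s / |C|) := by ring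
    rw [e, e2]; exact h
  have hqm : ∀ y : ℝ, HasDerivAt (fun z : ℝ =>
        -(C / (1 + ε)) * ((z - y₀) ^ 2 + s * -(z - y₀) / |C| - ε * (s / (2 * C)) ^ 2) + u₀)
      (-(C / (1 + ε)) * (2 * (y - y₀) - s / |C|)) y := by
    intro y
    have h := hq_aux (-(C / (1 + ε))) (C / (1 + ε) * (s / |C|))
      (C / (1 + ε) * (ε * (s / (2 * C)) ^ 2) + u₀) y₀ y
    have e : (fun z : ℝ =>
          -(C / (1 + ε)) * ((z - y₀) ^ 2 + s * -(z - y₀) / |C| - ε * (s / (2 * C)) ^ 2) + u₀)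
        = fun z : ℝ => -(C / (1 + ε)) * ((z - y₀) * (z - y₀))
            + C / (1 + ε) * (s / |C|) * (z - y₀)
            + (C / (1 + ε) * (ε * (s / (2 * C)) ^ 2) + u₀) := by
      funext z; ring
    have e2 : -(C / (1 + ε)) * (2 * (y - y₀) - s / |C|)
        = 2 * (-(C / (1 + ε))) * (y - y₀) + C / (1 + ε) * (s / |C|) := by ring
    rw [e, e2]; exact h
  -- linear functions (second-derivative step)
  have hqL1 : ∀ y : ℝ, HasDerivAt (fun z : ℝ => -(2 * C / ε) * (z - y₀)) (-(2 * C / ε)) y := by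
    intro y
    have h := ((hasDerivAt_id y).sub_const y₀).const_mul (-(2 * C / ε))
    simpa using h
  have hqL2 : ∀ (k : ℝ) (y : ℝ),
      HasDerivAt (fun z : ℝ => -(C / (1 + ε)) * (2 * (z - y₀) + k)) (-(C / (1 + ε)) * 2) y := by
    intro k y
    have h := ((((hasDerivAt_id y).sub_const y₀).const_mul (2 : ℝ)).add_const k).const_mul
      (-(C / (1 + ε)))
    simpa using h
  have hqL3 : ∀ (k : ℝ) (y : ℝ),
      HasDerivAt (fun z : ℝ => -(C / (1 + ε)) * (2 * (z - y₀) - k)) (-(C / (1 + ε)) * 2) y := by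
    intro k y
    have h := ((((hasDerivAt_id y).sub_const y₀).const_mul (2 : ℝ)).sub_const k).const_mul
      (-(C / (1 + ε)))
    simpa using h
  -- rewrite u on the outer region with the abs removed
  have habs_pos : ∀ z : ℝ, t₀ ≤ z - y₀ →
      u z = -(C / (1 + ε)) * ((z - y₀) ^ 2 + s * (z - y₀) / |C| - ε * (s / (2 * C)) ^ 2) + u₀ := by
    intro z hz
    have h1 : |z - y₀| = z - y₀ := abs_of_nonneg (le_trans ht0.le hz)
    rw [hu₂ z (by rw [h1]; exact hz), h1]
  have habs_neg : ∀ z : ℝ, z - y₀ ≤ -t₀ →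
      u z = -(C / (1 + ε)) * ((z - y₀) ^ 2 + s * -(z - y₀) / |C| - ε * (s / (2 * C)) ^ 2) + u₀ := by
    intro z hz
    have h1 : |z - y₀| = -(z - y₀) := abs_of_nonpos (by linarith)
    rw [hu₂ z (by rw [h1]; linarith), h1]
  -- value matches at the junctions
  have hmp : -(2 * C / ε) * t₀ = -(C / (1 + ε)) * (2 * t₀ + s / |C|) := by
    rw [ht₀]; field_simp; ring
  have hmm : -(2 * C / ε) * (-t₀) = -(C / (1 + ε)) * (2 * (-t₀) - s / |C|) := by
    rw [ht₀]; field_simp; ring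
  -- the main derivative statement
  have hDa : ∀ y : ℝ, HasDerivAt u (D y) y := by
    intro y
    rcases lt_trichotomy (|y - y₀|) t₀ with h | h | h
    · rw [hDdef, Dfun_inner h.le]
      have hev := (isOpen_lt hcabs continuous_const).eventually_mem h
      refine (hqf y).congr_of_eventuallyEq ?_
      filter_upwards [hev] with z hz
      have hz' : |z - y₀| < t₀ := hz
      exact hu₁ z hz'.le
    · rw [hDdef, Dfun_inner h.le]
      rcases (abs_eq ht0.le).mp h with heq | heq
      · -- right junction  y = y₀ + t₀
        have hIic : HasDerivWithinAt u (-(2 * C / ε) * (y - y₀)) (Iic y) y := by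
          refine ((hqf y).hasDerivWithinAt).congr_of_eventuallyEq ?_ (hu₁ y h.le)
          have h1 : ∀ᶠ z in 𝓝[Iic y] y, y₀ - t₀ < z :=
            nhdsWithin_le_nhds (eventually_gt_nhds (by linarith))
          have h2 : ∀ᶠ z in 𝓝[Iic y] y, z ∈ Iic y := eventually_mem_nhdsWithin
          filter_upwards [h1, h2] with z hz1 hz2
          have hz2' : z ≤ y := hz2
          exact hu₁ z (abs_le.mpr ⟨by linarith, by linarith⟩)
        have hIci : HasDerivWithinAt u (-(2 * C / ε) * (y - y₀)) (Ici y) y := by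
          have h' := ((hqp y).hasDerivWithinAt (s := Ici y)).congr
            (fun z hz => habs_pos z (by have : y ≤ z := hz; linarith))
            (habs_pos y (by linarith))
          have e : -(C / (1 + ε)) * (2 * (y - y₀) + s / |C|) = -(2 * C / ε) * (y - y₀) := by
            rw [heq]; exact hmp.symm
          rwa [e] at h'
        have h3 := hIic.union hIci
        rw [Iic_union_Ici] at h3
        exact hasDerivWithinAt_univ.mp h3
      · -- left junction  y = y₀ - t₀
        have hIci : HasDerivWithinAt u (-(2 * C / ε) * (y - y₀)) (Ici y) y := by
          refine ((hqf y).hasDerivWithinAt).congr_of_eventuallyEq ?_ (hu₁ y h.le)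
          have h1 : ∀ᶠ z in 𝓝[Ici y] y, z < y₀ + t₀ :=
            nhdsWithin_le_nhds (eventually_lt_nhds (by linarith))
          have h2 : ∀ᶠ z in 𝓝[Ici y] y, z ∈ Ici y := eventually_mem_nhdsWithin
          filter_upwards [h1, h2] with z hz1 hz2
          have hz2' : y ≤ z := hz2
          exact hu₁ z (abs_le.mpr ⟨by linarith, by linarith⟩)
        have hIic : HasDerivWithinAt u (-(2 * C / ε) * (y - y₀)) (Iic y) y := by
          have h' := ((hqm y).hasDerivWithinAt (s := Iic y)).congr
            (fun z hz => habs_neg z (by have : z ≤ y := hz; linarith))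
            (habs_neg y (by linarith))
          have e : -(C / (1 + ε)) * (2 * (y - y₀) - s / |C|) = -(2 * C / ε) * (y - y₀) := by
            rw [heq]; exact hmm.symm
          rwa [e] at h'
        have h3 := hIic.union hIci
        rw [Iic_union_Ici] at h3
        exact hasDerivWithinAt_univ.mp h3
    · rcases le_or_gt 0 (y - y₀) with h0 | h0
      · have hyy : t₀ < y - y₀ := by rwa [abs_of_nonneg h0] at h
        rw [hDdef, Dfun_pos ht0 hyy]
        have hev := (isOpen_lt continuous_const hcsub).eventually_mem hyy
        refine (hqp y).congr_of_eventuallyEq ?_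
        filter_upwards [hev] with z hz
        have hz' : t₀ < z - y₀ := hz
        exact habs_pos z hz'.le
      · have hyy : y - y₀ < -t₀ := by
          rw [abs_of_neg h0] at h; linarith
        rw [hDdef, Dfun_neg ht0 hyy]
        have hev := (isOpen_lt hcsub continuous_const).eventually_mem hyy
        refine (hqm y).congr_of_eventuallyEq ?_
        filter_upwards [hev] with z hz
        have hz' : z - y₀ < -t₀ := hz
        exact habs_neg z hz'.le
  have hderiv : deriv u = D := funext fun y => (hDa y).deriv
  -- continuity of D
  have hL1c : Continuous fun z : ℝ => -(2 * C / ε) * (z - y₀) := by fun_prop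
  have hL2c : Continuous fun z : ℝ => -(C / (1 + ε)) * (2 * (z - y₀) + s / |C|) := by fun_prop
  have hL3c : Continuous fun z : ℝ => -(C / (1 + ε)) * (2 * (z - y₀) - s / |C|) := by fun_prop
  have hDcont : Continuous D := by
    rw [continuous_iff_continuousAt]
    intro y
    rcases lt_trichotomy (|y - y₀|) t₀ with h | h | h
    · refine hL1c.continuousAt.congr ?_
      have hev := (isOpen_lt hcabs continuous_const).eventually_mem h
      filter_upwards [hev] with z hz
      have hz' : |z - y₀| < t₀ := hz
      exact (Dfun_inner hz'.le).symm
    · rcases (abs_eq ht0.le).mp h with heq | heq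
      · have hWIic : ContinuousWithinAt D (Iic y) y := by
          refine (hL1c.continuousWithinAt).congr_of_eventuallyEq ?_ (Dfun_inner h.le)
          have h1 : ∀ᶠ z in 𝓝[Iic y] y, y₀ - t₀ < z :=
            nhdsWithin_le_nhds (eventually_gt_nhds (by linarith))
          have h2 : ∀ᶠ z in 𝓝[Iic y] y, z ∈ Iic y := eventually_mem_nhdsWithin
          filter_upwards [h1, h2] with z hz1 hz2
          have hz2' : z ≤ y := hz2
          exact Dfun_inner (abs_le.mpr ⟨by linarith, by linarith⟩)
        have hWIci : ContinuousWithinAt D (Ici y) y := by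
          refine (hL2c.continuousWithinAt).congr ?_ ?_
          · intro z hz
            have hz' : y ≤ z := hz
            rcases eq_or_lt_of_le hz' with he | hlt
            · rw [← he, hDdef, Dfun_inner h.le, heq]; exact hmp
            · exact Dfun_pos ht0 (by linarith)
          · rw [hDdef, Dfun_inner h.le, heq]; exact hmp
        have h3 := continuousWithinAt_union.mpr ⟨hWIic, hWIci⟩
        rw [Iic_union_Ici] at h3
        exact continuousWithinAt_univ D y |>.mp h3
      · have hWIci : ContinuousWithinAt D (Ici y) y := by
          refine (hL1c.continuousWithinAt).congr_of_eventuallyEq ?_ (Dfun_inner h.le)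
          have h1 : ∀ᶠ z in 𝓝[Ici y] y, z < y₀ + t₀ :=
            nhdsWithin_le_nhds (eventually_lt_nhds (by linarith))
          have h2 : ∀ᶠ z in 𝓝[Ici y] y, z ∈ Ici y := eventually_mem_nhdsWithin
          filter_upwards [h1, h2] with z hz1 hz2
          have hz2' : y ≤ z := hz2
          exact Dfun_inner (abs_le.mpr ⟨by linarith, by linarith⟩)
        have hWIic : ContinuousWithinAt D (Iic y) y := by
          refine (hL3c.continuousWithinAt).congr ?_ ?_
          · intro z hz
            have hz' : z ≤ y := hz
            rcases eq_or_lt_of_le hz' with he | hlt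
            · rw [he, hDdef, Dfun_inner h.le, heq]; exact hmm
            · exact Dfun_neg ht0 (by linarith)
          · rw [hDdef, Dfun_inner h.le, heq]; exact hmm
        have h3 := continuousWithinAt_union.mpr ⟨hWIic, hWIci⟩
        rw [Iic_union_Ici] at h3
        exact continuousWithinAt_univ D y |>.mp h3
    · rcases le_or_gt 0 (y - y₀) with h0 | h0
      · have hyy : t₀ < y - y₀ := by rwa [abs_of_nonneg h0] at h
        refine hL2c.continuousAt.congr ?_
        have hev := (isOpen_lt continuous_const hcsub).eventually_mem hyy
        filter_upwards [hev] with z hz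
        have hz' : t₀ < z - y₀ := hz
        exact (Dfun_pos ht0 hz').symm
      · have hyy : y - y₀ < -t₀ := by
          rw [abs_of_neg h0] at h; linarith
        refine hL3c.continuousAt.congr ?_
        have hev := (isOpen_lt hcsub continuous_const).eventually_mem hyy
        filter_upwards [hev] with z hz
        have hz' : z - y₀ < -t₀ := hz
        exact (Dfun_neg ht0 hz').symm
  -- part 2
  have P2 : ∀ y, |y - y₀| ≤ t₀ → |deriv u y| ≤ s := by
    intro y hy
    rw [hderiv, hDdef, Dfun_inner hy]
    have e : |(-(2 * C / ε)) * (y - y₀)| = 2 * |C| / ε * |y - y₀| := by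
      rw [abs_mul, abs_neg, abs_div, abs_mul, abs_two, abs_of_pos hε]
    rw [e, div_mul_eq_mul_div, div_le_iff₀ hε]
    calc 2 * |C| * |y - y₀| ≤ 2 * |C| * t₀ := by nlinarith
      _ = s * ε := h2At0
  -- part 3
  have P3 : ∀ y, t₀ < |y - y₀| → s < |deriv u y| := by
    intro y hy
    rcases le_or_gt 0 (y - y₀) with h0 | h0
    · have hyy : t₀ < y - y₀ := by rwa [abs_of_nonneg h0] at hy
      rw [hderiv, hDdef, Dfun_pos ht0 hyy]
      have hsC : 0 < s / |C| := by positivity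
      have hp : 0 < 2 * (y - y₀) + s / |C| := by linarith
      rw [abs_mul, abs_neg, abs_div, abs_of_pos hε1, abs_of_pos hp,
        div_mul_eq_mul_div, lt_div_iff₀ hε1]
      have e2 : |C| * (2 * (y - y₀) + s / |C|) = 2 * |C| * (y - y₀) + s := by
        field_simp
      rw [e2]
      nlinarith
    · have hyy : y - y₀ < -t₀ := by
        rw [abs_of_neg h0] at hy; linarith
      rw [hderiv, hDdef, Dfun_neg ht0 hyy]
      have hsC : 0 < s / |C| := by positivity
      have hn : 2 * (y - y₀) - s / |C| < 0 := by linarith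
      rw [abs_mul, abs_neg, abs_div, abs_of_pos hε1, abs_of_neg hn,
        div_mul_eq_mul_div, lt_div_iff₀ hε1]
      have e2 : |C| * -(2 * (y - y₀) - s / |C|) = -(2 * |C| * (y - y₀)) + s := by
        field_simp; ring
      rw [e2]
      nlinarith
  refine ⟨contDiff_one_iff_deriv.mpr ⟨fun y => (hDa y).differentiableAt, hderiv ▸ hDcont⟩,
    P2, P3, ?_⟩
  intro y hy
  rcases hy.lt_or_gt with h | h
  · refine ⟨-(2 * C / ε), ?_, ?_⟩
    · refine (hqL1 y).congr_of_eventuallyEq ?_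
      have hev := (isOpen_lt hcabs continuous_const).eventually_mem h
      filter_upwards [hev] with z hz
      have hz' : |z - y₀| < t₀ := hz
      rw [hderiv, hDdef]
      exact Dfun_inner hz'.le
    · have hb := P2 y h.le
      have hH0 : H (|deriv u y| - s) = 0 := by
        rw [hH]; exact if_neg (not_lt.mpr (by linarith))
      rw [hH0]
      field_simp
      ring
  · refine ⟨-(C / (1 + ε)) * 2, ?_, ?_⟩
    · rcases le_or_gt 0 (y - y₀) with h0 | h0
      · have hyy : t₀ < y - y₀ := by rwa [abs_of_nonneg h0] at h
        refine (hqL2 (s / |C|) y).congr_of_eventuallyEq ?_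
        have hev := (isOpen_lt continuous_const hcsub).eventually_mem hyy
        filter_upwards [hev] with z hz
        have hz' : t₀ < z - y₀ := hz
        rw [hderiv, hDdef]
        exact Dfun_pos ht0 hz'
      · have hyy : y - y₀ < -t₀ := by
          rw [abs_of_neg h0] at h; linarith
        refine (hqL3 (s / |C|) y).congr_of_eventuallyEq ?_
        have hev := (isOpen_lt hcsub continuous_const).eventually_mem hyy
        filter_upwards [hev] with z hz
        have hz' : z - y₀ < -t₀ := hz
        rw [hderiv, hDdef]
        exact Dfun_neg ht0 hz'
    · have hb := P3 y h
      have hH1 : H (|deriv u y| - s) = 1 := by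
        rw [hH]; exact if_pos (by linarith)
      rw [hH1]
      field_simp
      ring
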